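/- Let A ∈ ℝ^{n×n}, B^m ∈ ℝ^{n×m}, B^p ∈ ℝ^{n×r}, C ∈ ℝ^{p×n}, and let U ∈ ℝ^{m×N}, W ∈ ℝ^{r×N}, X ∈ ℝ^{n×N} be data matrices such that [U; W; X] has full row rank m + r + n. Define Ẋ := A X + B^m U + B^p W and Y := C X. Then for every s ∈ ℂ, the rank over ℂ of the stacked matrix [s X − Ẋ; U; Y] (real data matrices complexified) equals m plus the rank over ℂ of the block matrix [[s I_n − A, −B^p], [C, 0]]. -/

import Mathlib

open Matrix

section Aux

variable {K : Type*} [Field K]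

/-- Reindexing a (possibly rectangular) matrix does not change the rank. -/
lemma aux_rank_reindex {k l m' n' : Type*} [Fintype l] [Fintype n'] (e₁ : k ≃ m') (e₂ : l ≃ n')
    (A : Matrix k l K) : (reindex e₁ e₂ A).rank = A.rank := by
  rw [Matrix.rank, Matrix.rank, mulVecLin_reindex, LinearMap.range_comp, LinearMap.range_comp,
    LinearEquiv.range, Submodule.map_top, LinearEquiv.finrank_map_eq]

lemma aux_rank_submatrix {k l m' n' : Type*} [Fintype l] [Fintype n'] (e₁ : m' ≃ k) (e₂ : n' ≃ l)
    (A : Matrix k l K) : (A.submatrix e₁ e₂).rank = A.rank := by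
  have : A.submatrix e₁ e₂ = reindex e₁.symm e₂.symm A := rfl
  rw [this, aux_rank_reindex]

/-- The product of two submodules is linearly equivalent to the product of the subtypes. -/
def auxProdEquiv {V W : Type*} [AddCommGroup V] [AddCommGroup W] [Module K V] [Module K W]
    (p : Submodule K V) (q : Submodule K W) : (p.prod q) ≃ₗ[K] p × q where
  toFun x := (⟨x.1.1, x.2.1⟩, ⟨x.1.2, x.2.2⟩)
  invFun y := ⟨(y.1.1, y.2.1), ⟨y.1.2, y.2.2⟩⟩
  left_inv _ := rfl
  right_inv _ := rfl
  map_add' _ _ := rfl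
  map_smul' _ _ := rfl

lemma aux_finrank_prod {V W : Type*} [AddCommGroup V] [AddCommGroup W] [Module K V] [Module K W]
    [FiniteDimensional K V] [FiniteDimensional K W]
    (p : Submodule K V) (q : Submodule K W) :
    Module.finrank K (p.prod q) = Module.finrank K p + Module.finrank K q := by
  rw [(auxProdEquiv p q).finrank_eq, Module.finrank_prod]

lemma aux_range_prodMap {V W V' W' : Type*} [AddCommGroup V] [AddCommGroup W]
    [AddCommGroup V'] [AddCommGroup W'] [Module K V] [Module K W] [Module K V'] [Module K W']
    (f : V →ₗ[K] V') (g : W →ₗ[K] W') :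
    LinearMap.range (f.prodMap g) = (LinearMap.range f).prod (LinearMap.range g) := by
  ext ⟨x, y⟩
  simp only [LinearMap.mem_range, Submodule.mem_prod, LinearMap.prodMap_apply, Prod.mk.injEq,
    Prod.exists]
  constructor
  · rintro ⟨a, b, h1, h2⟩
    exact ⟨⟨a, h1⟩, ⟨b, h2⟩⟩
  · rintro ⟨⟨a, ha⟩, ⟨b, hb⟩⟩
    exact ⟨a, b, ha, hb⟩

/-- The rank of a block diagonal matrix is the sum of the ranks of the blocks. -/
lemma aux_rank_fromBlocks_diag {m₁ n₁ m₂ n₂ : Type*} [Fintype m₁] [Fintype n₁] [Fintype m₂]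
    [Fintype n₂] (A : Matrix m₁ n₁ K) (D : Matrix m₂ n₂ K) :
    (fromBlocks A 0 0 D).rank = A.rank + D.rank := by
  have h : (fromBlocks A 0 0 D).mulVecLin =
      ((LinearEquiv.sumArrowLequivProdArrow m₁ m₂ K K).symm.toLinearMap.comp
        ((A.mulVecLin.prodMap D.mulVecLin).comp
          (LinearEquiv.sumArrowLequivProdArrow n₁ n₂ K K).toLinearMap)) := by
    refine LinearMap.ext fun v => funext fun i => ?_
    cases i <;>
      simp [fromBlocks_mulVec, LinearEquiv.sumArrowLequivProdArrow, Matrix.mulVecLin_apply] <;>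
      rfl
  rw [Matrix.rank, h, LinearMap.range_comp, LinearMap.range_comp, LinearEquiv.range,
    Submodule.map_top, aux_range_prodMap, LinearEquiv.finrank_map_eq, aux_finrank_prod]
  rfl

/-- Multiplying on the right by a right-invertible matrix preserves rank. -/
lemma aux_rank_mul_right_inv {p q N' : Type*} [Fintype q] [Fintype N'] [DecidableEq q]
    (G : Matrix p q K) (D : Matrix q N' K) (R : Matrix N' q K) (hDR : D * R = 1) :
    (G * D).rank = G.rank := by
  refine le_antisymm (Matrix.rank_mul_le_left G D) ?_
  have : G = G * D * R := by rw [Matrix.mul_assoc, hDR, Matrix.mul_one]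
  calc G.rank = (G * D * R).rank := by rw [← this]
    _ ≤ (G * D).rank := Matrix.rank_mul_le_left _ _

end Aux

/-- A matrix with full row rank has a right inverse. -/
lemma aux_right_inverse {p N' : Type*} [Fintype p] [Fintype N'] [DecidableEq p]
    (D : Matrix p N' ℝ) (h : D.rank = Fintype.card p) :
    ∃ R : Matrix N' p ℝ, D * R = 1 := by
  have hsurj : Function.Surjective D.mulVecLin := by
    rw [← LinearMap.range_eq_top]
    apply Submodule.eq_top_of_finrank_eq
    rw [← Matrix.rank, h, Module.finrank_pi]
  obtain ⟨g, hg⟩ := hsurj.hasRightInverse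
  refine ⟨Matrix.of fun k i => g (Pi.single i 1) k, ?_⟩
  ext j i
  have : D.mulVec (fun k => g (Pi.single i 1) k) = Pi.single i 1 := hg (Pi.single i 1)
  calc (D * Matrix.of fun k i => g (Pi.single i 1) k) j i
      = D.mulVec (fun k => g (Pi.single i 1) k) j := by
        simp [Matrix.mul_apply, Matrix.mulVec, dotProduct]
    _ = (1 : Matrix p p ℝ) j i := by
        rw [this]
        simp [Matrix.one_apply, Pi.single_apply]


section MapC

variable {a b c : Type*}

lemma mapc_mul [Fintype b] (M : Matrix a b ℝ) (N : Matrix b c ℝ) :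
    (M * N).map Complex.ofReal = M.map Complex.ofReal * N.map Complex.ofReal :=
  Matrix.map_mul (f := Complex.ofRealHom)

lemma mapc_add (M N : Matrix a b ℝ) :
    (M + N).map Complex.ofReal = M.map Complex.ofReal + N.map Complex.ofReal :=
  Matrix.map_add _ (fun _ _ => Complex.ofReal_add _ _) _ _

lemma mapc_one [DecidableEq a] [Fintype a] :
    (1 : Matrix a a ℝ).map Complex.ofReal = 1 :=
  Matrix.map_one _ Complex.ofReal_zero Complex.ofReal_one

end MapC

/-- For every `s ∈ ℂ`, the rank of the (complexified) stacked data matrix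
`[sX − Ẋ; U; Y]` equals `m` plus the rank of the block matrix
`[[sI − A, −Bᵖ], [C, 0]]`. -/
theorem stmt10 {n m r pdim N : ℕ}
    (A : Matrix (Fin n) (Fin n) ℝ)
    (Bm : Matrix (Fin n) (Fin m) ℝ) (Bp : Matrix (Fin n) (Fin r) ℝ)
    (C : Matrix (Fin pdim) (Fin n) ℝ)
    (U : Matrix (Fin m) (Fin N) ℝ) (W : Matrix (Fin r) (Fin N) ℝ)
    (X : Matrix (Fin n) (Fin N) ℝ)
    (hrank : (Matrix.fromRows U (Matrix.fromRows W X)).rank = m + r + n)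
    (Xdot : Matrix (Fin n) (Fin N) ℝ) (hXdot : Xdot = A * X + Bm * U + Bp * W)
    (Y : Matrix (Fin pdim) (Fin N) ℝ) (hY : Y = C * X) :
    ∀ s : ℂ,
      (Matrix.fromRows (s • X.map Complex.ofReal - Xdot.map Complex.ofReal)
        (Matrix.fromRows (U.map Complex.ofReal) (Y.map Complex.ofReal))).rank =
      m + (Matrix.fromBlocks
        (s • (1 : Matrix (Fin n) (Fin n) ℂ) - A.map Complex.ofReal)
        (-(Bp.map Complex.ofReal)) (C.map Complex.ofReal) 0).rank := by
  intro s
  -- notation for complexified matrices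
  set Ac := A.map Complex.ofReal
  set Bmc := Bm.map Complex.ofReal
  set Bpc := Bp.map Complex.ofReal
  set Cc := C.map Complex.ofReal
  set Uc := U.map Complex.ofReal
  set Wc := W.map Complex.ofReal
  set Xc := X.map Complex.ofReal
  -- the real data matrix and its right inverse
  set D : Matrix (Fin m ⊕ (Fin r ⊕ Fin n)) (Fin N) ℝ := Matrix.fromRows U (Matrix.fromRows W X)
    with hD
  obtain ⟨R, hR⟩ : ∃ R : Matrix (Fin N) (Fin m ⊕ (Fin r ⊕ Fin n)) ℝ, D * R = 1 := by
    apply aux_right_inverse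
    rw [hrank]
    simp [Fintype.card_sum]
    omega
  -- complexified data matrix
  set Dc : Matrix (Fin m ⊕ (Fin r ⊕ Fin n)) (Fin N) ℂ :=
    Matrix.fromRows Uc (Matrix.fromRows Wc Xc) with hDc
  have hDmap : D.map Complex.ofReal = Dc := by
    ext (i | (i | i)) j <;> rfl
  have hRc : Dc * R.map Complex.ofReal = 1 := by
    rw [← hDmap, ← mapc_mul, hR, mapc_one]
  -- the coefficient matrix G
  set G : Matrix (Fin n ⊕ (Fin m ⊕ Fin pdim)) (Fin m ⊕ (Fin r ⊕ Fin n)) ℂ :=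
    Matrix.fromRows
      (Matrix.fromCols (-Bmc) (Matrix.fromCols (-Bpc) (s • 1 - Ac)))
      (Matrix.fromRows
        (Matrix.fromCols 1 0)
        (Matrix.fromCols 0 (Matrix.fromCols 0 Cc))) with hG
  -- Step A : the stacked matrix equals G * Dc
  have hXdotc : Xdot.map Complex.ofReal = Ac * Xc + Bmc * Uc + Bpc * Wc := by
    rw [hXdot, mapc_add, mapc_add, mapc_mul, mapc_mul, mapc_mul]
  have hYc : Y.map Complex.ofReal = Cc * Xc := by
    rw [hY, mapc_mul]
  have hM : Matrix.fromRows (s • Xc - Xdot.map Complex.ofReal)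
      (Matrix.fromRows Uc (Y.map Complex.ofReal)) = G * Dc := by
    have h1 : (Matrix.fromCols (-Bmc) (Matrix.fromCols (-Bpc) (s • 1 - Ac))) * Dc =
        s • Xc - Xdot.map Complex.ofReal := by
      rw [hDc, Matrix.fromCols_mul_fromRows, Matrix.fromCols_mul_fromRows, hXdotc,
        Matrix.sub_mul, Matrix.smul_mul, Matrix.one_mul, Matrix.neg_mul, Matrix.neg_mul]
      abel
    have h2 : (Matrix.fromCols 1 0 :
        Matrix (Fin m) (Fin m ⊕ (Fin r ⊕ Fin n)) ℂ) * Dc = Uc := by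
      rw [hDc, Matrix.fromCols_mul_fromRows, Matrix.one_mul, Matrix.zero_mul, add_zero]
    have h3 : (Matrix.fromCols 0 (Matrix.fromCols 0 Cc) :
        Matrix (Fin pdim) (Fin m ⊕ (Fin r ⊕ Fin n)) ℂ) * Dc =
        Y.map Complex.ofReal := by
      rw [hDc, Matrix.fromCols_mul_fromRows, Matrix.fromCols_mul_fromRows,
        Matrix.zero_mul, Matrix.zero_mul, zero_add, zero_add, hYc]
    rw [hG, Matrix.fromRows_mul, Matrix.fromRows_mul, h1, h2, h3]
  -- Step A' : rank M = rank G
  have hrankM : (Matrix.fromRows (s • Xc - Xdot.map Complex.ofReal)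
      (Matrix.fromRows Uc (Y.map Complex.ofReal))).rank = G.rank := by
    rw [hM]
    exact aux_rank_mul_right_inv G Dc (R.map Complex.ofReal) hRc
  -- Step B : row operation eliminating -Bmc
  set P : Matrix (Fin n ⊕ (Fin m ⊕ Fin pdim)) (Fin n ⊕ (Fin m ⊕ Fin pdim)) ℂ :=
    Matrix.fromBlocks 1 (Matrix.fromCols Bmc 0) 0 1 with hP
  have hPdet : IsUnit P.det := by
    rw [hP, Matrix.det_fromBlocks_zero₂₁]
    simp
  set G' : Matrix (Fin n ⊕ (Fin m ⊕ Fin pdim)) (Fin m ⊕ (Fin r ⊕ Fin n)) ℂ :=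
    Matrix.fromRows
      (Matrix.fromCols 0 (Matrix.fromCols (-Bpc) (s • 1 - Ac)))
      (Matrix.fromRows
        (Matrix.fromCols 1 0)
        (Matrix.fromCols 0 (Matrix.fromCols 0 Cc))) with hG'
  have hPG : P * G = G' := by
    rw [hP, hG, hG']
    ext (i | (i | i)) (j | (j | j)) <;>
      simp [Matrix.mul_apply, Matrix.fromBlocks,
        Fintype.sum_sum_type, Matrix.one_apply, Finset.sum_ite_eq, mul_ite, ite_mul]
  have hrankG : G.rank = G'.rank := by
    rw [← hPG]
    exact (Matrix.rank_mul_eq_right_of_isUnit_det P G hPdet).symm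
  -- Step C : G' is a permutation of a block diagonal matrix
  set K : Matrix (Fin n ⊕ Fin pdim) (Fin n ⊕ Fin r) ℂ :=
    Matrix.fromBlocks (s • 1 - Ac) (-Bpc) Cc 0 with hK
  set er : (Fin n ⊕ (Fin m ⊕ Fin pdim)) ≃ (Fin m ⊕ (Fin n ⊕ Fin pdim)) :=
    (Equiv.sumAssoc _ _ _).symm.trans
      ((Equiv.sumCongr (Equiv.sumComm _ _) (Equiv.refl _)).trans (Equiv.sumAssoc _ _ _))
  set ec : (Fin m ⊕ (Fin r ⊕ Fin n)) ≃ (Fin m ⊕ (Fin n ⊕ Fin r)) :=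
    Equiv.sumCongr (Equiv.refl _) (Equiv.sumComm _ _)
  have hsub : G' = (Matrix.fromBlocks (1 : Matrix (Fin m) (Fin m) ℂ) 0 0 K).submatrix er ec := by
    ext (i | (i | i)) (j | (j | j)) <;>
      simp [hG', hK, er, ec, Equiv.sumAssoc,
        Equiv.sumComm, Equiv.sumCongr]
  have hrankG' : G'.rank = m + K.rank := by
    rw [hsub, aux_rank_submatrix, aux_rank_fromBlocks_diag, Matrix.rank_one, Fintype.card_fin]
  rw [hrankM, hrankG, hrankG']
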